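/- There exists a group homomorphism ρ₀ : SL_3(F₂) → GL_3(ℤ₂), where ℤ₂ denotes the ring of 2-adic integers, such that for every M ∈ SL_3(F₂) and all indices i,j, reducing the (i,j)-entry of ρ₀(M) modulo 2 (via the canonical surjection ℤ₂ → F₂) gives M(i,j). In other words, ρ₀ is a lift to ℤ₂ of the inclusion SL_3(F₂) ⊆ GL_3(F₂). -/

import Mathlib

open Matrix

namespace SL3Lift

structure Rq where
  a : ℤ
  b : ℤ
deriving DecidableEq

namespace Rq

@[ext] lemma ext2 {x y : Rq} (h1 : x.a = y.a) (h2 : x.b = y.b) : x = y := by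
  cases x; cases y; cases h1; cases h2; rfl

instance : Zero Rq := ⟨⟨0,0⟩⟩
instance : One Rq := ⟨⟨1,0⟩⟩
instance : Add Rq := ⟨fun x y => ⟨x.a+y.a, x.b+y.b⟩⟩
instance : Neg Rq := ⟨fun x => ⟨-x.a,-x.b⟩⟩
instance : Mul Rq := ⟨fun x y => ⟨x.a*y.a-2*x.b*y.b, x.a*y.b+x.b*y.a+x.b*y.b⟩⟩

lemma zero_def : (0 : Rq) = ⟨0,0⟩ := rfl
lemma one_def : (1 : Rq) = ⟨1,0⟩ := rfl
lemma add_def (x y : Rq) : x + y = ⟨x.a+y.a, x.b+y.b⟩ := rfl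
lemma neg_def (x : Rq) : -x = ⟨-x.a,-x.b⟩ := rfl
lemma mul_def (x y : Rq) : x * y = ⟨x.a*y.a-2*x.b*y.b, x.a*y.b+x.b*y.a+x.b*y.b⟩ := rfl

instance commRing : CommRing Rq where
  add_assoc a b c := by ext <;> simp [add_def] <;> ring
  zero_add a := by ext <;> simp [add_def, zero_def]
  add_zero a := by ext <;> simp [add_def, zero_def]
  add_comm a b := by ext <;> simp [add_def] <;> ring
  mul_assoc a b c := by ext <;> simp [mul_def] <;> ring
  one_mul a := by ext <;> simp [mul_def, one_def]
  mul_one a := by ext <;> simp [mul_def, one_def]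
  left_distrib a b c := by ext <;> simp [mul_def, add_def] <;> ring
  right_distrib a b c := by ext <;> simp [mul_def, add_def] <;> ring
  mul_comm a b := by ext <;> simp [mul_def] <;> ring
  zero_mul a := by ext <;> simp [mul_def, zero_def]
  mul_zero a := by ext <;> simp [mul_def, zero_def]
  neg_add_cancel a := by ext <;> simp [add_def, neg_def, zero_def]
  nsmul := nsmulRec
  zsmul := zsmulRec

end Rq

structure M9 where
  e00 : Rq
  e01 : Rq
  e02 : Rq
  e10 : Rq
  e11 : Rq
  e12 : Rq
  e20 : Rq
  e21 : Rq
  e22 : Rq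
deriving DecidableEq

structure F9 where
  e00 : ZMod 2
  e01 : ZMod 2
  e02 : ZMod 2
  e10 : ZMod 2
  e11 : ZMod 2
  e12 : ZMod 2
  e20 : ZMod 2
  e21 : ZMod 2
  e22 : ZMod 2
deriving DecidableEq

def M9.one : M9 := ⟨1,0,0,0,1,0,0,0,1⟩

def M9.mul (A B : M9) : M9 :=
  ⟨A.e00*B.e00 + A.e01*B.e10 + A.e02*B.e20,
   A.e00*B.e01 + A.e01*B.e11 + A.e02*B.e21,
   A.e00*B.e02 + A.e01*B.e12 + A.e02*B.e22,
   A.e10*B.e00 + A.e11*B.e10 + A.e12*B.e20,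
   A.e10*B.e01 + A.e11*B.e11 + A.e12*B.e21,
   A.e10*B.e02 + A.e11*B.e12 + A.e12*B.e22,
   A.e20*B.e00 + A.e21*B.e10 + A.e22*B.e20,
   A.e20*B.e01 + A.e21*B.e11 + A.e22*B.e21,
   A.e20*B.e02 + A.e21*B.e12 + A.e22*B.e22⟩

def M9.red2 (A : M9) : F9 :=
  ⟨(A.e00.a : ZMod 2), (A.e01.a : ZMod 2), (A.e02.a : ZMod 2),
   (A.e10.a : ZMod 2), (A.e11.a : ZMod 2), (A.e12.a : ZMod 2),
   (A.e20.a : ZMod 2), (A.e21.a : ZMod 2), (A.e22.a : ZMod 2)⟩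

def M9.toMatrix (A : M9) : Matrix (Fin 3) (Fin 3) Rq :=
  !![A.e00, A.e01, A.e02; A.e10, A.e11, A.e12; A.e20, A.e21, A.e22]

def F9.toMatrix (A : F9) : Matrix (Fin 3) (Fin 3) (ZMod 2) :=
  !![A.e00, A.e01, A.e02; A.e10, A.e11, A.e12; A.e20, A.e21, A.e22]

def F9.ofMatrix (N : Matrix (Fin 3) (Fin 3) (ZMod 2)) : F9 :=
  ⟨N 0 0, N 0 1, N 0 2, N 1 0, N 1 1, N 1 2, N 2 0, N 2 1, N 2 2⟩

def Xm : M9 := M9.mk (Rq.mk (-2) (1)) (Rq.mk (3) (0)) (Rq.mk (1) (-1)) (Rq.mk (-1) (1)) (Rq.mk (2) (-1)) (Rq.mk (0) (-1)) (Rq.mk (1) (0)) (Rq.mk (-2) (0)) (Rq.mk (-1) (1))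
def Ym : M9 := M9.mk (Rq.mk (0) (-1)) (Rq.mk (-2) (2)) (Rq.mk (1) (1)) (Rq.mk (0) (-1)) (Rq.mk (-1) (2)) (Rq.mk (2) (0)) (Rq.mk (-1) (0)) (Rq.mk (2) (0)) (Rq.mk (0) (-1))
def Xim : M9 := M9.mk (Rq.mk (0) (0)) (Rq.mk (1) (-1)) (Rq.mk (0) (-1)) (Rq.mk (1) (0)) (Rq.mk (-1) (-1)) (Rq.mk (-1) (0)) (Rq.mk (0) (-1)) (Rq.mk (-1) (2)) (Rq.mk (1) (0))
def Yim : M9 := M9.mk (Rq.mk (0) (-1)) (Rq.mk (-2) (2)) (Rq.mk (1) (1)) (Rq.mk (0) (-1)) (Rq.mk (-1) (2)) (Rq.mk (2) (0)) (Rq.mk (-1) (0)) (Rq.mk (2) (0)) (Rq.mk (0) (-1))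

def Slist0 : List M9 := [
  M9.mk (Rq.mk (1) (0)) (Rq.mk (0) (0)) (Rq.mk (0) (0)) (Rq.mk (0) (0)) (Rq.mk (1) (0)) (Rq.mk (0) (0)) (Rq.mk (0) (0)) (Rq.mk (0) (0)) (Rq.mk (1) (0)),
  M9.mk (Rq.mk (-2) (1)) (Rq.mk (3) (0)) (Rq.mk (1) (-1)) (Rq.mk (-1) (1)) (Rq.mk (2) (-1)) (Rq.mk (0) (-1)) (Rq.mk (1) (0)) (Rq.mk (-2) (0)) (Rq.mk (-1) (1)),
  M9.mk (Rq.mk (0) (-1)) (Rq.mk (-2) (2)) (Rq.mk (1) (1)) (Rq.mk (0) (-1)) (Rq.mk (-1) (2)) (Rq.mk (2) (0)) (Rq.mk (-1) (0)) (Rq.mk (2) (0)) (Rq.mk (0) (-1)),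
  M9.mk (Rq.mk (0) (-1)) (Rq.mk (-2) (2)) (Rq.mk (1) (0)) (Rq.mk (0) (-1)) (Rq.mk (-1) (2)) (Rq.mk (1) (0)) (Rq.mk (-1) (0)) (Rq.mk (1) (0)) (Rq.mk (0) (0)),
  M9.mk (Rq.mk (1) (-1)) (Rq.mk (-1) (0)) (Rq.mk (0) (0)) (Rq.mk (0) (0)) (Rq.mk (0) (-1)) (Rq.mk (-1) (0)) (Rq.mk (1) (0)) (Rq.mk (-2) (0)) (Rq.mk (-1) (1)),
  M9.mk (Rq.mk (1) (0)) (Rq.mk (-2) (-1)) (Rq.mk (-1) (1)) (Rq.mk (1) (0)) (Rq.mk (-2) (0)) (Rq.mk (0) (1)) (Rq.mk (0) (0)) (Rq.mk (1) (0)) (Rq.mk (1) (-1)),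
  M9.mk (Rq.mk (1) (-1)) (Rq.mk (-2) (1)) (Rq.mk (1) (1)) (Rq.mk (0) (0)) (Rq.mk (0) (0)) (Rq.mk (1) (0)) (Rq.mk (1) (0)) (Rq.mk (-1) (-1)) (Rq.mk (-1) (0)),
  M9.mk (Rq.mk (1) (1)) (Rq.mk (0) (-2)) (Rq.mk (-2) (1)) (Rq.mk (1) (0)) (Rq.mk (-1) (0)) (Rq.mk (0) (1)) (Rq.mk (0) (0)) (Rq.mk (1) (0)) (Rq.mk (1) (-1)),
  M9.mk (Rq.mk (1) (1)) (Rq.mk (1) (-2)) (Rq.mk (-1) (0)) (Rq.mk (1) (0)) (Rq.mk (0) (-1)) (Rq.mk (-1) (0)) (Rq.mk (-1) (0)) (Rq.mk (1) (0)) (Rq.mk (0) (0)),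
  M9.mk (Rq.mk (1) (0)) (Rq.mk (-1) (-1)) (Rq.mk (-2) (1)) (Rq.mk (0) (0)) (Rq.mk (-1) (0)) (Rq.mk (-1) (1)) (Rq.mk (0) (0)) (Rq.mk (0) (1)) (Rq.mk (1) (0)),
  M9.mk (Rq.mk (-1) (1)) (Rq.mk (2) (-1)) (Rq.mk (-1) (-1)) (Rq.mk (0) (0)) (Rq.mk (0) (0)) (Rq.mk (-1) (0)) (Rq.mk (-1) (0)) (Rq.mk (1) (0)) (Rq.mk (0) (0)),
  M9.mk (Rq.mk (1) (1)) (Rq.mk (-1) (-2)) (Rq.mk (-2) (1)) (Rq.mk (1) (0)) (Rq.mk (-2) (0)) (Rq.mk (-1) (1)) (Rq.mk (0) (0)) (Rq.mk (1) (0)) (Rq.mk (0) (0)),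
  M9.mk (Rq.mk (-1) (0)) (Rq.mk (2) (1)) (Rq.mk (1) (-1)) (Rq.mk (-1) (0)) (Rq.mk (2) (0)) (Rq.mk (0) (-1)) (Rq.mk (-1) (1)) (Rq.mk (1) (-1)) (Rq.mk (-1) (0)),
  M9.mk (Rq.mk (-2) (1)) (Rq.mk (3) (-1)) (Rq.mk (-1) (-1)) (Rq.mk (-1) (1)) (Rq.mk (1) (-1)) (Rq.mk (-1) (0)) (Rq.mk (0) (0)) (Rq.mk (0) (1)) (Rq.mk (1) (0)),
  M9.mk (Rq.mk (-2) (1)) (Rq.mk (3) (0)) (Rq.mk (0) (-1)) (Rq.mk (-1) (1)) (Rq.mk (3) (-1)) (Rq.mk (0) (-1)) (Rq.mk (1) (0)) (Rq.mk (-1) (-1)) (Rq.mk (-1) (0)),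
  M9.mk (Rq.mk (-1) (-1)) (Rq.mk (-1) (2)) (Rq.mk (1) (0)) (Rq.mk (-1) (0)) (Rq.mk (0) (1)) (Rq.mk (1) (0)) (Rq.mk (0) (0)) (Rq.mk (1) (0)) (Rq.mk (1) (-1)),
  M9.mk (Rq.mk (-1) (1)) (Rq.mk (3) (-2)) (Rq.mk (-1) (-1)) (Rq.mk (0) (0)) (Rq.mk (0) (-1)) (Rq.mk (-1) (0)) (Rq.mk (-1) (0)) (Rq.mk (0) (1)) (Rq.mk (1) (0)),
  M9.mk (Rq.mk (0) (0)) (Rq.mk (-1) (1)) (Rq.mk (1) (0)) (Rq.mk (1) (0)) (Rq.mk (-1) (0)) (Rq.mk (0) (0)) (Rq.mk (1) (-1)) (Rq.mk (-2) (1)) (Rq.mk (0) (1)),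
  M9.mk (Rq.mk (-1) (-1)) (Rq.mk (1) (2)) (Rq.mk (2) (-1)) (Rq.mk (-1) (0)) (Rq.mk (2) (0)) (Rq.mk (1) (-1)) (Rq.mk (1) (0)) (Rq.mk (-1) (-1)) (Rq.mk (-1) (0)),
  M9.mk (Rq.mk (-1) (0)) (Rq.mk (1) (0)) (Rq.mk (-1) (0)) (Rq.mk (-1) (0)) (Rq.mk (1) (0)) (Rq.mk (0) (0)) (Rq.mk (-1) (1)) (Rq.mk (2) (-1)) (Rq.mk (0) (-1)),
  M9.mk (Rq.mk (0) (0)) (Rq.mk (-1) (0)) (Rq.mk (-1) (0)) (Rq.mk (1) (0)) (Rq.mk (-2) (0)) (Rq.mk (-1) (1)) (Rq.mk (0) (-1)) (Rq.mk (-1) (2)) (Rq.mk (2) (0)),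
  M9.mk (Rq.mk (-1) (0)) (Rq.mk (1) (1)) (Rq.mk (2) (-1)) (Rq.mk (0) (0)) (Rq.mk (1) (0)) (Rq.mk (1) (-1)) (Rq.mk (0) (-1)) (Rq.mk (-1) (1)) (Rq.mk (0) (0)),
  M9.mk (Rq.mk (0) (-1)) (Rq.mk (0) (1)) (Rq.mk (1) (-1)) (Rq.mk (0) (-1)) (Rq.mk (-1) (1)) (Rq.mk (0) (0)) (Rq.mk (-1) (0)) (Rq.mk (0) (1)) (Rq.mk (1) (0)),
  M9.mk (Rq.mk (1) (0)) (Rq.mk (-1) (-1)) (Rq.mk (0) (0)) (Rq.mk (1) (0)) (Rq.mk (-1) (-1)) (Rq.mk (-1) (0)) (Rq.mk (1) (-1)) (Rq.mk (-2) (1)) (Rq.mk (0) (1))]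
def Slist1 : List M9 := [
  M9.mk (Rq.mk (-1) (-1)) (Rq.mk (0) (2)) (Rq.mk (2) (-1)) (Rq.mk (-1) (0)) (Rq.mk (1) (1)) (Rq.mk (1) (-1)) (Rq.mk (0) (0)) (Rq.mk (1) (0)) (Rq.mk (0) (0)),
  M9.mk (Rq.mk (2) (-1)) (Rq.mk (-3) (0)) (Rq.mk (0) (1)) (Rq.mk (0) (-1)) (Rq.mk (-1) (1)) (Rq.mk (1) (0)) (Rq.mk (-1) (1)) (Rq.mk (1) (-1)) (Rq.mk (-1) (0)),
  M9.mk (Rq.mk (2) (-1)) (Rq.mk (-3) (0)) (Rq.mk (0) (1)) (Rq.mk (1) (-1)) (Rq.mk (-3) (1)) (Rq.mk (0) (1)) (Rq.mk (0) (0)) (Rq.mk (0) (1)) (Rq.mk (1) (0)),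
  M9.mk (Rq.mk (0) (0)) (Rq.mk (1) (0)) (Rq.mk (0) (-1)) (Rq.mk (1) (0)) (Rq.mk (0) (-1)) (Rq.mk (-1) (0)) (Rq.mk (1) (-1)) (Rq.mk (-3) (1)) (Rq.mk (0) (1)),
  M9.mk (Rq.mk (-1) (0)) (Rq.mk (1) (0)) (Rq.mk (1) (-1)) (Rq.mk (-1) (1)) (Rq.mk (2) (-1)) (Rq.mk (0) (-1)) (Rq.mk (1) (0)) (Rq.mk (0) (-1)) (Rq.mk (-1) (0)),
  M9.mk (Rq.mk (0) (-1)) (Rq.mk (-2) (2)) (Rq.mk (1) (1)) (Rq.mk (-1) (0)) (Rq.mk (1) (1)) (Rq.mk (1) (0)) (Rq.mk (0) (1)) (Rq.mk (1) (-2)) (Rq.mk (-1) (0)),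
  M9.mk (Rq.mk (1) (0)) (Rq.mk (-1) (0)) (Rq.mk (1) (0)) (Rq.mk (1) (0)) (Rq.mk (-1) (0)) (Rq.mk (0) (0)) (Rq.mk (0) (0)) (Rq.mk (1) (0)) (Rq.mk (0) (0)),
  M9.mk (Rq.mk (0) (0)) (Rq.mk (1) (0)) (Rq.mk (1) (0)) (Rq.mk (-1) (0)) (Rq.mk (2) (0)) (Rq.mk (1) (-1)) (Rq.mk (-1) (1)) (Rq.mk (1) (-1)) (Rq.mk (-1) (0)),
  M9.mk (Rq.mk (0) (0)) (Rq.mk (1) (-1)) (Rq.mk (0) (-1)) (Rq.mk (1) (0)) (Rq.mk (-1) (-1)) (Rq.mk (-1) (0)) (Rq.mk (0) (-1)) (Rq.mk (-1) (2)) (Rq.mk (1) (0)),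
  M9.mk (Rq.mk (1) (0)) (Rq.mk (-1) (0)) (Rq.mk (1) (0)) (Rq.mk (0) (0)) (Rq.mk (1) (0)) (Rq.mk (1) (-1)) (Rq.mk (0) (0)) (Rq.mk (0) (-1)) (Rq.mk (-1) (0)),
  M9.mk (Rq.mk (0) (-1)) (Rq.mk (0) (1)) (Rq.mk (1) (0)) (Rq.mk (-1) (0)) (Rq.mk (1) (0)) (Rq.mk (0) (0)) (Rq.mk (1) (0)) (Rq.mk (-2) (0)) (Rq.mk (0) (1)),
  M9.mk (Rq.mk (1) (-1)) (Rq.mk (-3) (2)) (Rq.mk (1) (1)) (Rq.mk (0) (0)) (Rq.mk (0) (1)) (Rq.mk (1) (0)) (Rq.mk (1) (0)) (Rq.mk (0) (-1)) (Rq.mk (0) (0)),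
  M9.mk (Rq.mk (0) (0)) (Rq.mk (1) (-1)) (Rq.mk (-1) (0)) (Rq.mk (-1) (0)) (Rq.mk (1) (0)) (Rq.mk (0) (0)) (Rq.mk (0) (1)) (Rq.mk (1) (-1)) (Rq.mk (0) (0)),
  M9.mk (Rq.mk (1) (0)) (Rq.mk (0) (0)) (Rq.mk (1) (0)) (Rq.mk (1) (0)) (Rq.mk (0) (-1)) (Rq.mk (0) (0)) (Rq.mk (1) (-1)) (Rq.mk (-3) (1)) (Rq.mk (0) (1)),
  M9.mk (Rq.mk (-1) (1)) (Rq.mk (2) (-1)) (Rq.mk (0) (0)) (Rq.mk (0) (1)) (Rq.mk (1) (-1)) (Rq.mk (0) (0)) (Rq.mk (1) (0)) (Rq.mk (0) (-1)) (Rq.mk (-1) (0)),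
  M9.mk (Rq.mk (1) (0)) (Rq.mk (-1) (0)) (Rq.mk (-1) (1)) (Rq.mk (0) (0)) (Rq.mk (1) (0)) (Rq.mk (0) (0)) (Rq.mk (0) (1)) (Rq.mk (1) (-2)) (Rq.mk (-1) (0)),
  M9.mk (Rq.mk (2) (-1)) (Rq.mk (-3) (1)) (Rq.mk (1) (1)) (Rq.mk (0) (-1)) (Rq.mk (-1) (2)) (Rq.mk (2) (0)) (Rq.mk (-1) (1)) (Rq.mk (2) (-1)) (Rq.mk (0) (-1)),
  M9.mk (Rq.mk (0) (1)) (Rq.mk (2) (-2)) (Rq.mk (-1) (0)) (Rq.mk (1) (0)) (Rq.mk (-1) (-1)) (Rq.mk (-1) (1)) (Rq.mk (0) (-1)) (Rq.mk (-1) (2)) (Rq.mk (2) (0)),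
  M9.mk (Rq.mk (1) (1)) (Rq.mk (0) (-2)) (Rq.mk (-2) (1)) (Rq.mk (2) (0)) (Rq.mk (-2) (-1)) (Rq.mk (-1) (1)) (Rq.mk (0) (-1)) (Rq.mk (-1) (1)) (Rq.mk (0) (0)),
  M9.mk (Rq.mk (1) (1)) (Rq.mk (0) (-2)) (Rq.mk (-2) (1)) (Rq.mk (1) (0)) (Rq.mk (-1) (-1)) (Rq.mk (-1) (1)) (Rq.mk (-1) (0)) (Rq.mk (0) (1)) (Rq.mk (1) (0)),
  M9.mk (Rq.mk (-2) (1)) (Rq.mk (3) (0)) (Rq.mk (0) (-1)) (Rq.mk (0) (1)) (Rq.mk (1) (-1)) (Rq.mk (-1) (0)) (Rq.mk (1) (-1)) (Rq.mk (-2) (1)) (Rq.mk (0) (1)),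
  M9.mk (Rq.mk (-1) (0)) (Rq.mk (2) (1)) (Rq.mk (2) (-1)) (Rq.mk (-1) (1)) (Rq.mk (3) (-1)) (Rq.mk (0) (-1)) (Rq.mk (1) (0)) (Rq.mk (-1) (-1)) (Rq.mk (-1) (1)),
  M9.mk (Rq.mk (0) (0)) (Rq.mk (-1) (0)) (Rq.mk (0) (1)) (Rq.mk (-1) (0)) (Rq.mk (0) (1)) (Rq.mk (1) (0)) (Rq.mk (0) (1)) (Rq.mk (1) (-1)) (Rq.mk (-1) (0)),
  M9.mk (Rq.mk (2) (-1)) (Rq.mk (-3) (1)) (Rq.mk (0) (1)) (Rq.mk (0) (-1)) (Rq.mk (-1) (2)) (Rq.mk (1) (0)) (Rq.mk (-1) (1)) (Rq.mk (3) (-1)) (Rq.mk (0) (-1))]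
def Slist2 : List M9 := [
  M9.mk (Rq.mk (1) (0)) (Rq.mk (-2) (-1)) (Rq.mk (-1) (1)) (Rq.mk (0) (0)) (Rq.mk (-1) (0)) (Rq.mk (0) (0)) (Rq.mk (0) (0)) (Rq.mk (0) (0)) (Rq.mk (-1) (0)),
  M9.mk (Rq.mk (1) (0)) (Rq.mk (0) (0)) (Rq.mk (0) (0)) (Rq.mk (1) (-1)) (Rq.mk (-1) (1)) (Rq.mk (1) (0)) (Rq.mk (-1) (0)) (Rq.mk (1) (0)) (Rq.mk (0) (-1)),
  M9.mk (Rq.mk (0) (0)) (Rq.mk (-1) (1)) (Rq.mk (0) (1)) (Rq.mk (-1) (0)) (Rq.mk (1) (1)) (Rq.mk (1) (0)) (Rq.mk (-1) (1)) (Rq.mk (2) (-1)) (Rq.mk (0) (-1)),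
  M9.mk (Rq.mk (-1) (0)) (Rq.mk (1) (0)) (Rq.mk (-1) (0)) (Rq.mk (0) (0)) (Rq.mk (-1) (0)) (Rq.mk (-1) (1)) (Rq.mk (0) (-1)) (Rq.mk (-1) (2)) (Rq.mk (2) (0)),
  M9.mk (Rq.mk (0) (1)) (Rq.mk (0) (-1)) (Rq.mk (-1) (0)) (Rq.mk (1) (0)) (Rq.mk (-1) (0)) (Rq.mk (0) (0)) (Rq.mk (0) (-1)) (Rq.mk (-1) (1)) (Rq.mk (0) (0)),
  M9.mk (Rq.mk (-2) (1)) (Rq.mk (3) (-1)) (Rq.mk (0) (-1)) (Rq.mk (-1) (1)) (Rq.mk (1) (-1)) (Rq.mk (-1) (0)) (Rq.mk (1) (0)) (Rq.mk (-1) (0)) (Rq.mk (0) (1)),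
  M9.mk (Rq.mk (0) (0)) (Rq.mk (-1) (1)) (Rq.mk (0) (1)) (Rq.mk (0) (0)) (Rq.mk (0) (1)) (Rq.mk (1) (0)) (Rq.mk (1) (0)) (Rq.mk (0) (-1)) (Rq.mk (-1) (0)),
  M9.mk (Rq.mk (1) (1)) (Rq.mk (0) (-2)) (Rq.mk (-1) (0)) (Rq.mk (1) (0)) (Rq.mk (-1) (-1)) (Rq.mk (-1) (0)) (Rq.mk (0) (0)) (Rq.mk (-1) (0)) (Rq.mk (-1) (1)),
  M9.mk (Rq.mk (-1) (0)) (Rq.mk (2) (1)) (Rq.mk (2) (-1)) (Rq.mk (0) (0)) (Rq.mk (1) (0)) (Rq.mk (1) (-1)) (Rq.mk (0) (0)) (Rq.mk (0) (0)) (Rq.mk (-1) (0)),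
  M9.mk (Rq.mk (1) (0)) (Rq.mk (-1) (0)) (Rq.mk (-1) (1)) (Rq.mk (1) (-1)) (Rq.mk (-2) (1)) (Rq.mk (0) (1)) (Rq.mk (-2) (0)) (Rq.mk (2) (1)) (Rq.mk (1) (-1)),
  M9.mk (Rq.mk (0) (1)) (Rq.mk (2) (-2)) (Rq.mk (-1) (-1)) (Rq.mk (1) (0)) (Rq.mk (-1) (-1)) (Rq.mk (-1) (0)) (Rq.mk (-1) (0)) (Rq.mk (0) (1)) (Rq.mk (0) (0)),
  M9.mk (Rq.mk (-1) (1)) (Rq.mk (1) (0)) (Rq.mk (0) (0)) (Rq.mk (0) (1)) (Rq.mk (1) (-1)) (Rq.mk (-1) (0)) (Rq.mk (1) (0)) (Rq.mk (-1) (-1)) (Rq.mk (-1) (1)),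
  M9.mk (Rq.mk (-1) (-1)) (Rq.mk (0) (2)) (Rq.mk (1) (0)) (Rq.mk (-2) (0)) (Rq.mk (2) (1)) (Rq.mk (1) (-1)) (Rq.mk (0) (1)) (Rq.mk (1) (-1)) (Rq.mk (-1) (0)),
  M9.mk (Rq.mk (0) (0)) (Rq.mk (-1) (0)) (Rq.mk (-1) (0)) (Rq.mk (-1) (0)) (Rq.mk (0) (1)) (Rq.mk (0) (0)) (Rq.mk (-1) (1)) (Rq.mk (3) (-1)) (Rq.mk (0) (-1)),
  M9.mk (Rq.mk (-2) (1)) (Rq.mk (3) (-1)) (Rq.mk (0) (-1)) (Rq.mk (-1) (1)) (Rq.mk (2) (-1)) (Rq.mk (0) (-1)) (Rq.mk (0) (0)) (Rq.mk (0) (0)) (Rq.mk (-1) (0)),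
  M9.mk (Rq.mk (1) (-1)) (Rq.mk (-3) (2)) (Rq.mk (1) (1)) (Rq.mk (0) (-1)) (Rq.mk (-1) (2)) (Rq.mk (2) (0)) (Rq.mk (-1) (0)) (Rq.mk (1) (0)) (Rq.mk (0) (-1)),
  M9.mk (Rq.mk (0) (1)) (Rq.mk (0) (-1)) (Rq.mk (-1) (1)) (Rq.mk (1) (0)) (Rq.mk (-2) (0)) (Rq.mk (0) (1)) (Rq.mk (0) (-1)) (Rq.mk (-1) (2)) (Rq.mk (1) (0)),
  M9.mk (Rq.mk (-1) (0)) (Rq.mk (1) (1)) (Rq.mk (0) (0)) (Rq.mk (0) (0)) (Rq.mk (1) (0)) (Rq.mk (0) (0)) (Rq.mk (0) (0)) (Rq.mk (0) (-1)) (Rq.mk (-1) (0)),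
  M9.mk (Rq.mk (-1) (1)) (Rq.mk (2) (-1)) (Rq.mk (-1) (-1)) (Rq.mk (0) (1)) (Rq.mk (1) (-2)) (Rq.mk (-2) (0)) (Rq.mk (1) (0)) (Rq.mk (-2) (0)) (Rq.mk (0) (1)),
  M9.mk (Rq.mk (-2) (1)) (Rq.mk (3) (-1)) (Rq.mk (-1) (-1)) (Rq.mk (-1) (1)) (Rq.mk (2) (-1)) (Rq.mk (-1) (0)) (Rq.mk (1) (0)) (Rq.mk (0) (-1)) (Rq.mk (0) (0)),
  M9.mk (Rq.mk (0) (-1)) (Rq.mk (-2) (2)) (Rq.mk (1) (0)) (Rq.mk (-1) (0)) (Rq.mk (0) (1)) (Rq.mk (0) (0)) (Rq.mk (0) (1)) (Rq.mk (1) (-1)) (Rq.mk (0) (0)),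
  M9.mk (Rq.mk (-2) (1)) (Rq.mk (3) (-1)) (Rq.mk (-1) (-1)) (Rq.mk (0) (1)) (Rq.mk (1) (-2)) (Rq.mk (-2) (0)) (Rq.mk (1) (-1)) (Rq.mk (-3) (1)) (Rq.mk (0) (1)),
  M9.mk (Rq.mk (0) (-1)) (Rq.mk (-2) (2)) (Rq.mk (1) (0)) (Rq.mk (-1) (0)) (Rq.mk (1) (1)) (Rq.mk (1) (-1)) (Rq.mk (1) (0)) (Rq.mk (0) (-1)) (Rq.mk (-1) (0)),
  M9.mk (Rq.mk (-1) (-1)) (Rq.mk (0) (2)) (Rq.mk (2) (-1)) (Rq.mk (-2) (0)) (Rq.mk (2) (1)) (Rq.mk (1) (-1)) (Rq.mk (0) (1)) (Rq.mk (1) (-2)) (Rq.mk (-1) (0))]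
def Slist3 : List M9 := [
  M9.mk (Rq.mk (0) (0)) (Rq.mk (-1) (1)) (Rq.mk (1) (0)) (Rq.mk (-1) (0)) (Rq.mk (1) (1)) (Rq.mk (1) (-1)) (Rq.mk (0) (1)) (Rq.mk (1) (-2)) (Rq.mk (-2) (0)),
  M9.mk (Rq.mk (0) (-1)) (Rq.mk (0) (1)) (Rq.mk (1) (0)) (Rq.mk (0) (-1)) (Rq.mk (-1) (1)) (Rq.mk (1) (0)) (Rq.mk (-1) (0)) (Rq.mk (1) (1)) (Rq.mk (1) (-1)),
  M9.mk (Rq.mk (1) (0)) (Rq.mk (-2) (-1)) (Rq.mk (-2) (1)) (Rq.mk (1) (-1)) (Rq.mk (-3) (1)) (Rq.mk (0) (1)) (Rq.mk (-2) (0)) (Rq.mk (2) (1)) (Rq.mk (1) (-1)),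
  M9.mk (Rq.mk (-1) (1)) (Rq.mk (2) (-1)) (Rq.mk (0) (0)) (Rq.mk (0) (0)) (Rq.mk (0) (0)) (Rq.mk (1) (0)) (Rq.mk (-1) (0)) (Rq.mk (1) (1)) (Rq.mk (1) (-1)),
  M9.mk (Rq.mk (0) (0)) (Rq.mk (-1) (1)) (Rq.mk (0) (1)) (Rq.mk (1) (0)) (Rq.mk (-1) (0)) (Rq.mk (0) (1)) (Rq.mk (0) (-1)) (Rq.mk (-1) (1)) (Rq.mk (1) (0)),
  M9.mk (Rq.mk (1) (0)) (Rq.mk (-1) (-1)) (Rq.mk (-2) (1)) (Rq.mk (1) (-1)) (Rq.mk (-2) (1)) (Rq.mk (0) (1)) (Rq.mk (-1) (0)) (Rq.mk (2) (0)) (Rq.mk (1) (-1)),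
  M9.mk (Rq.mk (-2) (1)) (Rq.mk (3) (0)) (Rq.mk (1) (-1)) (Rq.mk (0) (1)) (Rq.mk (1) (-1)) (Rq.mk (0) (0)) (Rq.mk (1) (-1)) (Rq.mk (-1) (1)) (Rq.mk (1) (0)),
  M9.mk (Rq.mk (-1) (0)) (Rq.mk (0) (0)) (Rq.mk (0) (0)) (Rq.mk (0) (0)) (Rq.mk (-1) (0)) (Rq.mk (0) (0)) (Rq.mk (0) (-1)) (Rq.mk (-1) (2)) (Rq.mk (1) (0)),
  M9.mk (Rq.mk (2) (-1)) (Rq.mk (-3) (1)) (Rq.mk (0) (1)) (Rq.mk (1) (-1)) (Rq.mk (-1) (1)) (Rq.mk (1) (0)) (Rq.mk (0) (0)) (Rq.mk (0) (-1)) (Rq.mk (-1) (0)),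
  M9.mk (Rq.mk (0) (0)) (Rq.mk (1) (-1)) (Rq.mk (0) (-1)) (Rq.mk (0) (0)) (Rq.mk (0) (-1)) (Rq.mk (-1) (0)) (Rq.mk (1) (0)) (Rq.mk (-2) (0)) (Rq.mk (0) (1)),
  M9.mk (Rq.mk (-1) (-1)) (Rq.mk (0) (2)) (Rq.mk (1) (0)) (Rq.mk (-1) (0)) (Rq.mk (1) (1)) (Rq.mk (1) (0)) (Rq.mk (1) (0)) (Rq.mk (0) (-1)) (Rq.mk (0) (0)),
  M9.mk (Rq.mk (1) (0)) (Rq.mk (-2) (-1)) (Rq.mk (-2) (1)) (Rq.mk (0) (0)) (Rq.mk (-1) (0)) (Rq.mk (-1) (1)) (Rq.mk (0) (1)) (Rq.mk (1) (-1)) (Rq.mk (0) (0)),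
  M9.mk (Rq.mk (1) (-1)) (Rq.mk (-2) (1)) (Rq.mk (0) (0)) (Rq.mk (0) (-1)) (Rq.mk (-1) (1)) (Rq.mk (0) (0)) (Rq.mk (-1) (1)) (Rq.mk (1) (-1)) (Rq.mk (-1) (0)),
  M9.mk (Rq.mk (-1) (0)) (Rq.mk (0) (0)) (Rq.mk (0) (0)) (Rq.mk (-1) (0)) (Rq.mk (0) (1)) (Rq.mk (1) (0)) (Rq.mk (-1) (1)) (Rq.mk (3) (-1)) (Rq.mk (0) (-1)),
  M9.mk (Rq.mk (2) (-1)) (Rq.mk (-3) (1)) (Rq.mk (0) (1)) (Rq.mk (1) (-1)) (Rq.mk (-2) (1)) (Rq.mk (0) (1)) (Rq.mk (-1) (0)) (Rq.mk (0) (1)) (Rq.mk (1) (0)),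
  M9.mk (Rq.mk (-1) (0)) (Rq.mk (0) (0)) (Rq.mk (-1) (0)) (Rq.mk (-1) (1)) (Rq.mk (1) (-1)) (Rq.mk (-1) (0)) (Rq.mk (1) (0)) (Rq.mk (-1) (0)) (Rq.mk (0) (0)),
  M9.mk (Rq.mk (0) (0)) (Rq.mk (-1) (1)) (Rq.mk (1) (0)) (Rq.mk (0) (0)) (Rq.mk (0) (1)) (Rq.mk (1) (0)) (Rq.mk (-1) (0)) (Rq.mk (2) (0)) (Rq.mk (1) (-1)),
  M9.mk (Rq.mk (-2) (1)) (Rq.mk (3) (-1)) (Rq.mk (0) (-1)) (Rq.mk (0) (1)) (Rq.mk (1) (-2)) (Rq.mk (-1) (0)) (Rq.mk (1) (-1)) (Rq.mk (-2) (1)) (Rq.mk (1) (0)),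
  M9.mk (Rq.mk (-1) (0)) (Rq.mk (2) (1)) (Rq.mk (1) (-1)) (Rq.mk (0) (0)) (Rq.mk (1) (0)) (Rq.mk (0) (0)) (Rq.mk (0) (-1)) (Rq.mk (-1) (1)) (Rq.mk (1) (0)),
  M9.mk (Rq.mk (-1) (0)) (Rq.mk (0) (0)) (Rq.mk (0) (0)) (Rq.mk (-1) (1)) (Rq.mk (1) (-1)) (Rq.mk (-1) (0)) (Rq.mk (2) (0)) (Rq.mk (-2) (-1)) (Rq.mk (-1) (1)),
  M9.mk (Rq.mk (-1) (-1)) (Rq.mk (-1) (2)) (Rq.mk (1) (0)) (Rq.mk (-2) (0)) (Rq.mk (2) (1)) (Rq.mk (1) (-1)) (Rq.mk (0) (1)) (Rq.mk (1) (-2)) (Rq.mk (-2) (0)),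
  M9.mk (Rq.mk (2) (-1)) (Rq.mk (-3) (0)) (Rq.mk (-1) (1)) (Rq.mk (1) (-1)) (Rq.mk (-3) (1)) (Rq.mk (0) (1)) (Rq.mk (-1) (0)) (Rq.mk (1) (1)) (Rq.mk (1) (-1)),
  M9.mk (Rq.mk (1) (0)) (Rq.mk (-1) (-1)) (Rq.mk (0) (0)) (Rq.mk (1) (-1)) (Rq.mk (-2) (1)) (Rq.mk (1) (0)) (Rq.mk (-2) (0)) (Rq.mk (2) (1)) (Rq.mk (1) (-1)),
  M9.mk (Rq.mk (1) (1)) (Rq.mk (-1) (-2)) (Rq.mk (-2) (1)) (Rq.mk (2) (0)) (Rq.mk (-2) (-1)) (Rq.mk (-1) (1)) (Rq.mk (0) (-1)) (Rq.mk (-1) (1)) (Rq.mk (1) (0))]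
def Slist4 : List M9 := [
  M9.mk (Rq.mk (1) (-1)) (Rq.mk (-2) (1)) (Rq.mk (0) (0)) (Rq.mk (0) (-1)) (Rq.mk (-1) (2)) (Rq.mk (1) (0)) (Rq.mk (-1) (0)) (Rq.mk (2) (0)) (Rq.mk (1) (-1)),
  M9.mk (Rq.mk (0) (0)) (Rq.mk (-1) (0)) (Rq.mk (0) (1)) (Rq.mk (1) (0)) (Rq.mk (-2) (0)) (Rq.mk (0) (1)) (Rq.mk (1) (-1)) (Rq.mk (-1) (1)) (Rq.mk (1) (0)),
  M9.mk (Rq.mk (-1) (0)) (Rq.mk (0) (0)) (Rq.mk (-1) (0)) (Rq.mk (0) (0)) (Rq.mk (-1) (0)) (Rq.mk (-1) (1)) (Rq.mk (0) (0)) (Rq.mk (0) (0)) (Rq.mk (1) (0)),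
  M9.mk (Rq.mk (1) (-1)) (Rq.mk (-2) (1)) (Rq.mk (0) (0)) (Rq.mk (0) (0)) (Rq.mk (0) (0)) (Rq.mk (-1) (0)) (Rq.mk (1) (0)) (Rq.mk (-1) (0)) (Rq.mk (0) (1)),
  M9.mk (Rq.mk (-1) (-1)) (Rq.mk (1) (2)) (Rq.mk (2) (-1)) (Rq.mk (-1) (0)) (Rq.mk (2) (0)) (Rq.mk (0) (-1)) (Rq.mk (0) (0)) (Rq.mk (-1) (0)) (Rq.mk (-1) (1)),
  M9.mk (Rq.mk (0) (-1)) (Rq.mk (0) (1)) (Rq.mk (1) (-1)) (Rq.mk (-1) (0)) (Rq.mk (1) (0)) (Rq.mk (0) (-1)) (Rq.mk (0) (1)) (Rq.mk (1) (-1)) (Rq.mk (-1) (0)),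
  M9.mk (Rq.mk (1) (-1)) (Rq.mk (-2) (1)) (Rq.mk (1) (1)) (Rq.mk (0) (-1)) (Rq.mk (-1) (1)) (Rq.mk (1) (0)) (Rq.mk (-1) (0)) (Rq.mk (0) (1)) (Rq.mk (0) (0)),
  M9.mk (Rq.mk (0) (-1)) (Rq.mk (0) (1)) (Rq.mk (1) (-1)) (Rq.mk (-1) (0)) (Rq.mk (2) (0)) (Rq.mk (0) (-1)) (Rq.mk (1) (0)) (Rq.mk (-1) (-1)) (Rq.mk (-1) (1)),
  M9.mk (Rq.mk (1) (0)) (Rq.mk (-1) (-1)) (Rq.mk (0) (0)) (Rq.mk (0) (0)) (Rq.mk (-1) (0)) (Rq.mk (0) (0)) (Rq.mk (0) (1)) (Rq.mk (1) (-1)) (Rq.mk (-1) (0)),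
  M9.mk (Rq.mk (1) (-1)) (Rq.mk (-2) (1)) (Rq.mk (1) (1)) (Rq.mk (0) (-1)) (Rq.mk (-1) (2)) (Rq.mk (2) (0)) (Rq.mk (-1) (1)) (Rq.mk (3) (-1)) (Rq.mk (0) (-1)),
  M9.mk (Rq.mk (2) (-1)) (Rq.mk (-3) (1)) (Rq.mk (1) (1)) (Rq.mk (1) (-1)) (Rq.mk (-2) (1)) (Rq.mk (1) (0)) (Rq.mk (0) (0)) (Rq.mk (0) (0)) (Rq.mk (-1) (0)),
  M9.mk (Rq.mk (0) (1)) (Rq.mk (2) (-2)) (Rq.mk (-1) (0)) (Rq.mk (1) (0)) (Rq.mk (0) (-1)) (Rq.mk (0) (0)) (Rq.mk (-1) (0)) (Rq.mk (1) (0)) (Rq.mk (0) (-1)),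
  M9.mk (Rq.mk (1) (0)) (Rq.mk (-1) (-1)) (Rq.mk (-2) (1)) (Rq.mk (1) (0)) (Rq.mk (-1) (-1)) (Rq.mk (-1) (1)) (Rq.mk (0) (0)) (Rq.mk (-1) (0)) (Rq.mk (0) (0)),
  M9.mk (Rq.mk (1) (1)) (Rq.mk (0) (-2)) (Rq.mk (-1) (0)) (Rq.mk (2) (0)) (Rq.mk (-2) (-1)) (Rq.mk (-1) (1)) (Rq.mk (0) (-1)) (Rq.mk (-1) (2)) (Rq.mk (2) (0)),
  M9.mk (Rq.mk (0) (0)) (Rq.mk (1) (-1)) (Rq.mk (-1) (0)) (Rq.mk (1) (0)) (Rq.mk (-1) (-1)) (Rq.mk (-1) (1)) (Rq.mk (1) (-1)) (Rq.mk (-2) (1)) (Rq.mk (1) (0)),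
  M9.mk (Rq.mk (0) (1)) (Rq.mk (0) (-1)) (Rq.mk (-1) (0)) (Rq.mk (0) (1)) (Rq.mk (1) (-1)) (Rq.mk (-1) (0)) (Rq.mk (1) (0)) (Rq.mk (0) (-1)) (Rq.mk (0) (0)),
  M9.mk (Rq.mk (-1) (1)) (Rq.mk (3) (-2)) (Rq.mk (-1) (-1)) (Rq.mk (0) (1)) (Rq.mk (1) (-2)) (Rq.mk (-1) (0)) (Rq.mk (1) (0)) (Rq.mk (-1) (0)) (Rq.mk (0) (0)),
  M9.mk (Rq.mk (1) (-1)) (Rq.mk (-1) (0)) (Rq.mk (0) (0)) (Rq.mk (0) (-1)) (Rq.mk (-1) (1)) (Rq.mk (0) (0)) (Rq.mk (-1) (0)) (Rq.mk (1) (1)) (Rq.mk (1) (0)),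
  M9.mk (Rq.mk (2) (-1)) (Rq.mk (-3) (0)) (Rq.mk (-1) (1)) (Rq.mk (1) (-1)) (Rq.mk (-2) (1)) (Rq.mk (0) (1)) (Rq.mk (0) (0)) (Rq.mk (0) (0)) (Rq.mk (1) (0)),
  M9.mk (Rq.mk (0) (1)) (Rq.mk (2) (-2)) (Rq.mk (-1) (-1)) (Rq.mk (0) (1)) (Rq.mk (1) (-2)) (Rq.mk (-2) (0)) (Rq.mk (1) (0)) (Rq.mk (-1) (0)) (Rq.mk (0) (1)),
  M9.mk (Rq.mk (1) (0)) (Rq.mk (0) (0)) (Rq.mk (0) (0)) (Rq.mk (1) (0)) (Rq.mk (0) (-1)) (Rq.mk (-1) (0)) (Rq.mk (0) (0)) (Rq.mk (-1) (0)) (Rq.mk (-1) (1)),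
  M9.mk (Rq.mk (1) (0)) (Rq.mk (0) (0)) (Rq.mk (1) (0)) (Rq.mk (1) (-1)) (Rq.mk (-1) (1)) (Rq.mk (1) (0)) (Rq.mk (-2) (0)) (Rq.mk (2) (1)) (Rq.mk (1) (-1)),
  M9.mk (Rq.mk (0) (0)) (Rq.mk (1) (-1)) (Rq.mk (-1) (0)) (Rq.mk (0) (0)) (Rq.mk (0) (-1)) (Rq.mk (-1) (0)) (Rq.mk (-1) (0)) (Rq.mk (0) (1)) (Rq.mk (0) (0)),
  M9.mk (Rq.mk (0) (0)) (Rq.mk (1) (0)) (Rq.mk (1) (0)) (Rq.mk (1) (0)) (Rq.mk (0) (-1)) (Rq.mk (0) (0)) (Rq.mk (0) (-1)) (Rq.mk (-1) (1)) (Rq.mk (0) (0))]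
def Slist5 : List M9 := [
  M9.mk (Rq.mk (0) (1)) (Rq.mk (0) (-1)) (Rq.mk (-1) (1)) (Rq.mk (0) (1)) (Rq.mk (1) (-1)) (Rq.mk (0) (0)) (Rq.mk (1) (0)) (Rq.mk (-1) (-1)) (Rq.mk (-1) (0)),
  M9.mk (Rq.mk (0) (1)) (Rq.mk (2) (-2)) (Rq.mk (-1) (-1)) (Rq.mk (1) (0)) (Rq.mk (0) (-1)) (Rq.mk (-1) (0)) (Rq.mk (0) (-1)) (Rq.mk (-1) (1)) (Rq.mk (1) (0)),
  M9.mk (Rq.mk (-1) (1)) (Rq.mk (2) (-1)) (Rq.mk (0) (0)) (Rq.mk (0) (1)) (Rq.mk (1) (-2)) (Rq.mk (-1) (0)) (Rq.mk (1) (-1)) (Rq.mk (-3) (1)) (Rq.mk (0) (1)),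
  M9.mk (Rq.mk (0) (-1)) (Rq.mk (-2) (2)) (Rq.mk (1) (1)) (Rq.mk (-1) (0)) (Rq.mk (0) (1)) (Rq.mk (1) (0)) (Rq.mk (1) (0)) (Rq.mk (-1) (0)) (Rq.mk (0) (0)),
  M9.mk (Rq.mk (0) (0)) (Rq.mk (1) (-1)) (Rq.mk (0) (-1)) (Rq.mk (-1) (0)) (Rq.mk (1) (0)) (Rq.mk (0) (-1)) (Rq.mk (-1) (1)) (Rq.mk (2) (-1)) (Rq.mk (-1) (0)),
  M9.mk (Rq.mk (-1) (0)) (Rq.mk (1) (1)) (Rq.mk (2) (-1)) (Rq.mk (-1) (1)) (Rq.mk (2) (-1)) (Rq.mk (0) (-1)) (Rq.mk (2) (0)) (Rq.mk (-2) (-1)) (Rq.mk (-1) (1)),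
  M9.mk (Rq.mk (2) (-1)) (Rq.mk (-3) (0)) (Rq.mk (-1) (1)) (Rq.mk (0) (-1)) (Rq.mk (-1) (1)) (Rq.mk (0) (0)) (Rq.mk (-1) (1)) (Rq.mk (2) (-1)) (Rq.mk (-1) (0)),
  M9.mk (Rq.mk (2) (-1)) (Rq.mk (-3) (0)) (Rq.mk (0) (1)) (Rq.mk (1) (-1)) (Rq.mk (-2) (1)) (Rq.mk (1) (0)) (Rq.mk (-1) (0)) (Rq.mk (2) (0)) (Rq.mk (0) (-1)),
  M9.mk (Rq.mk (1) (1)) (Rq.mk (1) (-2)) (Rq.mk (-1) (0)) (Rq.mk (1) (0)) (Rq.mk (0) (-1)) (Rq.mk (0) (0)) (Rq.mk (0) (0)) (Rq.mk (-1) (0)) (Rq.mk (0) (0)),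
  M9.mk (Rq.mk (1) (0)) (Rq.mk (-1) (0)) (Rq.mk (-1) (1)) (Rq.mk (1) (0)) (Rq.mk (-1) (0)) (Rq.mk (0) (1)) (Rq.mk (1) (-1)) (Rq.mk (-2) (1)) (Rq.mk (1) (0)),
  M9.mk (Rq.mk (-1) (0)) (Rq.mk (1) (0)) (Rq.mk (-1) (0)) (Rq.mk (-1) (1)) (Rq.mk (2) (-1)) (Rq.mk (-1) (0)) (Rq.mk (2) (0)) (Rq.mk (-2) (-1)) (Rq.mk (-1) (1)),
  M9.mk (Rq.mk (0) (0)) (Rq.mk (1) (0)) (Rq.mk (1) (0)) (Rq.mk (0) (0)) (Rq.mk (0) (0)) (Rq.mk (1) (0)) (Rq.mk (1) (0)) (Rq.mk (-1) (0)) (Rq.mk (0) (0)),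
  M9.mk (Rq.mk (0) (1)) (Rq.mk (0) (-1)) (Rq.mk (-1) (1)) (Rq.mk (1) (0)) (Rq.mk (-1) (0)) (Rq.mk (0) (1)) (Rq.mk (-1) (0)) (Rq.mk (2) (0)) (Rq.mk (1) (-1)),
  M9.mk (Rq.mk (0) (0)) (Rq.mk (1) (0)) (Rq.mk (0) (-1)) (Rq.mk (0) (0)) (Rq.mk (0) (0)) (Rq.mk (-1) (0)) (Rq.mk (-1) (0)) (Rq.mk (1) (1)) (Rq.mk (1) (0)),
  M9.mk (Rq.mk (1) (1)) (Rq.mk (0) (-2)) (Rq.mk (-1) (0)) (Rq.mk (1) (0)) (Rq.mk (-1) (0)) (Rq.mk (0) (0)) (Rq.mk (-1) (0)) (Rq.mk (2) (0)) (Rq.mk (0) (-1)),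
  M9.mk (Rq.mk (-1) (0)) (Rq.mk (2) (1)) (Rq.mk (1) (-1)) (Rq.mk (-1) (1)) (Rq.mk (3) (-1)) (Rq.mk (0) (-1)) (Rq.mk (2) (0)) (Rq.mk (-2) (-1)) (Rq.mk (-1) (1)),
  M9.mk (Rq.mk (1) (0)) (Rq.mk (0) (0)) (Rq.mk (1) (0)) (Rq.mk (0) (0)) (Rq.mk (1) (0)) (Rq.mk (1) (-1)) (Rq.mk (0) (1)) (Rq.mk (1) (-2)) (Rq.mk (-2) (0)),
  M9.mk (Rq.mk (1) (1)) (Rq.mk (-1) (-2)) (Rq.mk (-2) (1)) (Rq.mk (1) (0)) (Rq.mk (-2) (0)) (Rq.mk (0) (1)) (Rq.mk (-1) (0)) (Rq.mk (1) (1)) (Rq.mk (1) (-1)),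
  M9.mk (Rq.mk (-1) (0)) (Rq.mk (1) (1)) (Rq.mk (0) (0)) (Rq.mk (-1) (1)) (Rq.mk (2) (-1)) (Rq.mk (-1) (0)) (Rq.mk (1) (0)) (Rq.mk (-2) (0)) (Rq.mk (0) (1)),
  M9.mk (Rq.mk (-1) (1)) (Rq.mk (2) (-1)) (Rq.mk (-1) (-1)) (Rq.mk (0) (1)) (Rq.mk (1) (-1)) (Rq.mk (-1) (0)) (Rq.mk (1) (-1)) (Rq.mk (-1) (1)) (Rq.mk (1) (0)),
  M9.mk (Rq.mk (-1) (1)) (Rq.mk (3) (-2)) (Rq.mk (-1) (-1)) (Rq.mk (0) (1)) (Rq.mk (1) (-2)) (Rq.mk (-2) (0)) (Rq.mk (1) (-1)) (Rq.mk (-2) (1)) (Rq.mk (0) (1)),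
  M9.mk (Rq.mk (-1) (0)) (Rq.mk (0) (0)) (Rq.mk (-1) (0)) (Rq.mk (-1) (0)) (Rq.mk (0) (1)) (Rq.mk (0) (0)) (Rq.mk (0) (0)) (Rq.mk (1) (0)) (Rq.mk (0) (0)),
  M9.mk (Rq.mk (-1) (0)) (Rq.mk (1) (1)) (Rq.mk (2) (-1)) (Rq.mk (-1) (0)) (Rq.mk (1) (1)) (Rq.mk (1) (-1)) (Rq.mk (-1) (1)) (Rq.mk (2) (-1)) (Rq.mk (-1) (0)),
  M9.mk (Rq.mk (-1) (0)) (Rq.mk (1) (0)) (Rq.mk (1) (-1)) (Rq.mk (-1) (0)) (Rq.mk (1) (0)) (Rq.mk (0) (-1)) (Rq.mk (0) (0)) (Rq.mk (-1) (0)) (Rq.mk (-1) (1))]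
def Slist6 : List M9 := [
  M9.mk (Rq.mk (0) (1)) (Rq.mk (2) (-2)) (Rq.mk (-1) (0)) (Rq.mk (0) (1)) (Rq.mk (1) (-2)) (Rq.mk (-1) (0)) (Rq.mk (1) (0)) (Rq.mk (-2) (0)) (Rq.mk (-1) (1)),
  M9.mk (Rq.mk (-1) (1)) (Rq.mk (1) (0)) (Rq.mk (0) (0)) (Rq.mk (0) (0)) (Rq.mk (0) (1)) (Rq.mk (1) (0)) (Rq.mk (-1) (0)) (Rq.mk (2) (0)) (Rq.mk (0) (-1)),
  M9.mk (Rq.mk (-2) (1)) (Rq.mk (3) (0)) (Rq.mk (1) (-1)) (Rq.mk (-1) (1)) (Rq.mk (3) (-1)) (Rq.mk (0) (-1)) (Rq.mk (0) (0)) (Rq.mk (0) (-1)) (Rq.mk (-1) (0)),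
  M9.mk (Rq.mk (-1) (1)) (Rq.mk (1) (0)) (Rq.mk (0) (0)) (Rq.mk (0) (1)) (Rq.mk (1) (-1)) (Rq.mk (0) (0)) (Rq.mk (1) (-1)) (Rq.mk (-2) (1)) (Rq.mk (1) (0)),
  M9.mk (Rq.mk (-1) (-1)) (Rq.mk (1) (2)) (Rq.mk (2) (-1)) (Rq.mk (-2) (0)) (Rq.mk (2) (1)) (Rq.mk (1) (-1)) (Rq.mk (0) (1)) (Rq.mk (1) (-1)) (Rq.mk (0) (0)),
  M9.mk (Rq.mk (0) (0)) (Rq.mk (-1) (0)) (Rq.mk (-1) (0)) (Rq.mk (0) (0)) (Rq.mk (0) (0)) (Rq.mk (-1) (0)) (Rq.mk (1) (0)) (Rq.mk (-1) (-1)) (Rq.mk (-1) (1)),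
  M9.mk (Rq.mk (1) (0)) (Rq.mk (-2) (-1)) (Rq.mk (-1) (1)) (Rq.mk (1) (-1)) (Rq.mk (-3) (1)) (Rq.mk (0) (1)) (Rq.mk (-1) (0)) (Rq.mk (1) (1)) (Rq.mk (1) (0)),
  M9.mk (Rq.mk (1) (-1)) (Rq.mk (-3) (2)) (Rq.mk (1) (1)) (Rq.mk (0) (-1)) (Rq.mk (-1) (2)) (Rq.mk (1) (0)) (Rq.mk (-1) (1)) (Rq.mk (2) (-1)) (Rq.mk (-1) (0)),
  M9.mk (Rq.mk (-2) (1)) (Rq.mk (3) (0)) (Rq.mk (0) (-1)) (Rq.mk (-1) (1)) (Rq.mk (2) (-1)) (Rq.mk (-1) (0)) (Rq.mk (0) (0)) (Rq.mk (0) (0)) (Rq.mk (1) (0)),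
  M9.mk (Rq.mk (1) (0)) (Rq.mk (-1) (0)) (Rq.mk (1) (0)) (Rq.mk (1) (-1)) (Rq.mk (-2) (1)) (Rq.mk (1) (0)) (Rq.mk (-1) (0)) (Rq.mk (0) (1)) (Rq.mk (0) (0)),
  M9.mk (Rq.mk (0) (1)) (Rq.mk (0) (-1)) (Rq.mk (-1) (0)) (Rq.mk (1) (0)) (Rq.mk (-2) (0)) (Rq.mk (-1) (1)) (Rq.mk (-1) (0)) (Rq.mk (1) (1)) (Rq.mk (1) (0)),
  M9.mk (Rq.mk (-1) (0)) (Rq.mk (2) (1)) (Rq.mk (2) (-1)) (Rq.mk (-1) (0)) (Rq.mk (2) (0)) (Rq.mk (1) (-1)) (Rq.mk (0) (0)) (Rq.mk (-1) (0)) (Rq.mk (0) (0)),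
  M9.mk (Rq.mk (-1) (0)) (Rq.mk (1) (1)) (Rq.mk (0) (0)) (Rq.mk (-1) (0)) (Rq.mk (1) (1)) (Rq.mk (1) (0)) (Rq.mk (0) (0)) (Rq.mk (1) (0)) (Rq.mk (1) (-1)),
  M9.mk (Rq.mk (-1) (-1)) (Rq.mk (0) (2)) (Rq.mk (1) (0)) (Rq.mk (-1) (0)) (Rq.mk (1) (0)) (Rq.mk (0) (0)) (Rq.mk (0) (0)) (Rq.mk (-1) (0)) (Rq.mk (0) (0)),
  M9.mk (Rq.mk (0) (0)) (Rq.mk (1) (0)) (Rq.mk (0) (-1)) (Rq.mk (-1) (0)) (Rq.mk (2) (0)) (Rq.mk (0) (-1)) (Rq.mk (0) (1)) (Rq.mk (1) (-2)) (Rq.mk (-1) (0)),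
  M9.mk (Rq.mk (-1) (0)) (Rq.mk (1) (0)) (Rq.mk (1) (-1)) (Rq.mk (0) (0)) (Rq.mk (-1) (0)) (Rq.mk (0) (0)) (Rq.mk (0) (0)) (Rq.mk (0) (1)) (Rq.mk (1) (0)),
  M9.mk (Rq.mk (1) (-1)) (Rq.mk (-1) (0)) (Rq.mk (0) (0)) (Rq.mk (0) (-1)) (Rq.mk (-1) (1)) (Rq.mk (1) (0)) (Rq.mk (-1) (1)) (Rq.mk (2) (-1)) (Rq.mk (0) (-1)),
  M9.mk (Rq.mk (-1) (-1)) (Rq.mk (0) (2)) (Rq.mk (2) (-1)) (Rq.mk (-1) (0)) (Rq.mk (1) (0)) (Rq.mk (0) (-1)) (Rq.mk (1) (0)) (Rq.mk (-2) (0)) (Rq.mk (-1) (1)),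
  M9.mk (Rq.mk (-1) (-1)) (Rq.mk (-1) (2)) (Rq.mk (1) (0)) (Rq.mk (-1) (0)) (Rq.mk (0) (1)) (Rq.mk (0) (0)) (Rq.mk (1) (0)) (Rq.mk (-1) (0)) (Rq.mk (0) (1)),
  M9.mk (Rq.mk (0) (-1)) (Rq.mk (0) (1)) (Rq.mk (1) (0)) (Rq.mk (-1) (0)) (Rq.mk (2) (0)) (Rq.mk (1) (-1)) (Rq.mk (0) (1)) (Rq.mk (1) (-2)) (Rq.mk (-2) (0)),
  M9.mk (Rq.mk (0) (0)) (Rq.mk (-1) (0)) (Rq.mk (0) (1)) (Rq.mk (0) (0)) (Rq.mk (0) (0)) (Rq.mk (1) (0)) (Rq.mk (-1) (0)) (Rq.mk (1) (0)) (Rq.mk (0) (-1)),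
  M9.mk (Rq.mk (1) (0)) (Rq.mk (-2) (-1)) (Rq.mk (-2) (1)) (Rq.mk (1) (0)) (Rq.mk (-2) (0)) (Rq.mk (-1) (1)) (Rq.mk (1) (-1)) (Rq.mk (-1) (1)) (Rq.mk (1) (0)),
  M9.mk (Rq.mk (2) (-1)) (Rq.mk (-3) (1)) (Rq.mk (1) (1)) (Rq.mk (1) (-1)) (Rq.mk (-1) (1)) (Rq.mk (1) (0)) (Rq.mk (-1) (0)) (Rq.mk (1) (0)) (Rq.mk (0) (0)),
  M9.mk (Rq.mk (1) (1)) (Rq.mk (1) (-2)) (Rq.mk (-1) (0)) (Rq.mk (2) (0)) (Rq.mk (-2) (-1)) (Rq.mk (-1) (1)) (Rq.mk (0) (-1)) (Rq.mk (-1) (2)) (Rq.mk (1) (0))]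
def Slist : List M9 := Slist0 ++ Slist1 ++ Slist2 ++ Slist3 ++ Slist4 ++ Slist5 ++ Slist6

def SFl0 : List F9 := [
  F9.mk 1 0 0 0 1 0 0 0 1,
  F9.mk 0 1 1 1 0 0 1 0 1,
  F9.mk 0 0 1 0 1 0 1 0 0,
  F9.mk 0 0 1 0 1 1 1 1 0,
  F9.mk 1 1 0 0 0 1 1 0 1,
  F9.mk 1 0 1 1 0 0 0 1 1,
  F9.mk 1 0 1 0 0 1 1 1 1,
  F9.mk 1 0 0 1 1 0 0 1 1,
  F9.mk 1 1 1 1 0 1 1 1 0,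
  F9.mk 1 1 0 0 1 1 0 0 1,
  F9.mk 1 0 1 0 0 1 1 1 0,
  F9.mk 1 1 0 1 0 1 0 1 0,
  F9.mk 1 0 1 1 0 0 1 1 1,
  F9.mk 0 1 1 1 1 1 0 0 1,
  F9.mk 0 1 0 1 1 0 1 1 1,
  F9.mk 1 1 1 1 0 1 0 1 1,
  F9.mk 1 1 1 0 0 1 1 0 1,
  F9.mk 0 1 1 1 1 0 1 0 0,
  F9.mk 1 1 0 1 0 1 1 1 1,
  F9.mk 1 1 1 1 1 0 1 0 0,
  F9.mk 0 1 1 1 0 1 0 1 0,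
  F9.mk 1 1 0 0 1 1 0 1 0,
  F9.mk 0 0 1 0 1 0 1 0 1,
  F9.mk 1 1 0 1 1 1 1 0 0]
def SFl1 : List F9 := [
  F9.mk 1 0 0 1 1 1 0 1 0,
  F9.mk 0 1 0 0 1 1 1 1 1,
  F9.mk 0 1 0 1 1 0 0 0 1,
  F9.mk 0 1 0 1 0 1 1 1 0,
  F9.mk 1 1 1 1 0 0 1 0 1,
  F9.mk 0 0 1 1 1 1 0 1 1,
  F9.mk 1 1 1 1 1 0 0 1 0,
  F9.mk 0 1 1 1 0 1 1 1 1,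
  F9.mk 0 1 0 1 1 1 0 1 1,
  F9.mk 1 1 1 0 1 1 0 0 1,
  F9.mk 0 0 1 1 1 0 1 0 0,
  F9.mk 1 1 1 0 0 1 1 0 0,
  F9.mk 0 1 1 1 1 0 0 1 0,
  F9.mk 1 0 1 1 0 0 1 1 0,
  F9.mk 1 0 0 0 1 0 1 0 1,
  F9.mk 1 1 1 0 1 0 0 1 1,
  F9.mk 0 1 1 0 1 0 1 0 0,
  F9.mk 0 0 1 1 1 1 0 1 0,
  F9.mk 1 0 0 0 0 1 0 1 0,
  F9.mk 1 0 0 1 1 1 1 0 1,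
  F9.mk 0 1 0 0 1 1 1 0 0,
  F9.mk 1 0 0 1 1 0 1 1 1,
  F9.mk 0 1 0 1 0 1 0 1 1,
  F9.mk 0 1 0 0 1 1 1 1 0]
def SFl2 : List F9 := [
  F9.mk 1 0 1 0 1 0 0 0 1,
  F9.mk 1 0 0 1 1 1 1 1 0,
  F9.mk 0 1 0 1 1 1 1 0 0,
  F9.mk 1 1 1 0 1 1 0 1 0,
  F9.mk 0 0 1 1 1 0 0 1 0,
  F9.mk 0 1 0 1 1 1 1 1 0,
  F9.mk 0 1 0 0 0 1 1 0 1,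
  F9.mk 1 0 1 1 1 1 0 1 1,
  F9.mk 1 0 0 0 1 1 0 0 1,
  F9.mk 1 1 1 1 0 0 0 0 1,
  F9.mk 0 0 1 1 1 1 1 0 0,
  F9.mk 1 1 0 0 1 1 1 1 1,
  F9.mk 1 0 1 0 0 1 0 1 1,
  F9.mk 0 1 1 1 0 0 1 1 0,
  F9.mk 0 1 0 1 0 0 0 0 1,
  F9.mk 1 1 1 0 1 0 1 1 0,
  F9.mk 0 0 1 1 0 0 0 1 1,
  F9.mk 1 1 0 0 1 0 0 0 1,
  F9.mk 1 0 1 0 1 0 1 0 0,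
  F9.mk 0 1 1 1 0 1 1 0 0,
  F9.mk 0 0 1 1 0 0 0 1 0,
  F9.mk 0 1 1 0 1 0 1 1 0,
  F9.mk 0 0 1 1 1 1 1 0 1,
  F9.mk 1 0 0 0 0 1 0 1 1]
def SFl3 : List F9 := [
  F9.mk 0 1 1 1 1 1 0 1 0,
  F9.mk 0 0 1 0 1 1 1 1 1,
  F9.mk 1 0 0 1 1 0 0 0 1,
  F9.mk 1 0 0 0 0 1 1 1 1,
  F9.mk 0 1 0 1 1 0 0 1 1,
  F9.mk 1 1 0 1 0 0 1 0 1,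
  F9.mk 0 1 1 0 1 0 1 1 1,
  F9.mk 1 0 0 0 1 0 0 1 1,
  F9.mk 0 1 0 1 1 1 0 0 1,
  F9.mk 0 1 0 0 0 1 1 0 0,
  F9.mk 1 0 1 1 1 1 1 0 0,
  F9.mk 1 0 0 0 1 1 0 1 0,
  F9.mk 1 0 0 0 1 0 1 1 1,
  F9.mk 1 0 0 1 0 1 1 1 0,
  F9.mk 0 1 0 1 0 0 1 0 1,
  F9.mk 1 0 1 1 1 1 1 1 0,
  F9.mk 0 1 1 0 0 1 1 0 1,
  F9.mk 0 1 0 0 1 1 1 0 1,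
  F9.mk 1 0 1 0 1 0 0 1 1,
  F9.mk 1 0 0 1 1 1 0 0 1,
  F9.mk 1 1 1 0 0 1 0 1 0,
  F9.mk 0 1 1 1 1 0 1 1 1,
  F9.mk 1 1 0 1 0 1 0 0 1,
  F9.mk 1 1 0 0 0 1 0 1 1]
def SFl4 : List F9 := [
  F9.mk 1 0 0 0 1 1 1 0 1,
  F9.mk 0 1 0 1 0 0 1 1 1,
  F9.mk 1 0 1 0 1 1 0 0 1,
  F9.mk 1 0 0 0 0 1 1 1 0,
  F9.mk 1 1 0 1 0 0 0 1 1,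
  F9.mk 0 0 1 1 1 0 0 1 1,
  F9.mk 1 0 1 0 1 1 1 0 0,
  F9.mk 0 0 1 1 0 0 1 1 1,
  F9.mk 1 1 0 0 1 0 0 1 1,
  F9.mk 1 0 1 0 1 0 1 1 0,
  F9.mk 0 1 1 1 0 1 0 0 1,
  F9.mk 0 0 1 1 0 0 1 1 0,
  F9.mk 1 1 0 1 1 1 0 1 0,
  F9.mk 1 0 1 0 0 1 0 1 0,
  F9.mk 0 1 1 1 1 1 1 0 1,
  F9.mk 0 0 1 0 1 1 1 0 0,
  F9.mk 1 1 1 0 1 1 1 1 0,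
  F9.mk 1 1 0 0 1 0 1 1 1,
  F9.mk 0 1 1 1 0 0 0 0 1,
  F9.mk 0 0 1 0 1 0 1 1 0,
  F9.mk 1 0 0 1 0 1 0 1 1,
  F9.mk 1 0 1 1 1 1 0 0 1,
  F9.mk 0 1 1 0 0 1 1 0 0,
  F9.mk 0 1 1 1 0 0 0 1 0]
def SFl5 : List F9 := [
  F9.mk 0 0 1 0 1 0 1 1 1,
  F9.mk 0 0 1 1 0 1 0 1 1,
  F9.mk 1 0 0 0 1 1 1 1 0,
  F9.mk 0 0 1 1 0 1 1 1 0,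
  F9.mk 0 1 0 1 1 0 1 0 1,
  F9.mk 1 1 0 1 0 0 0 0 1,
  F9.mk 0 1 1 0 1 0 1 0 1,
  F9.mk 0 1 0 1 0 1 1 0 0,
  F9.mk 1 1 1 1 0 0 0 1 0,
  F9.mk 1 1 1 1 1 0 1 0 1,
  F9.mk 1 1 1 1 0 1 0 0 1,
  F9.mk 0 1 1 0 0 1 1 1 0,
  F9.mk 0 0 1 1 1 0 1 0 1,
  F9.mk 0 1 0 0 0 1 1 1 1,
  F9.mk 1 0 1 1 1 0 1 0 0,
  F9.mk 1 0 1 1 1 0 0 0 1,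
  F9.mk 1 0 1 0 1 1 0 1 0,
  F9.mk 1 1 0 1 0 0 1 1 1,
  F9.mk 1 1 0 1 0 1 1 0 0,
  F9.mk 1 0 1 0 1 1 1 1 1,
  F9.mk 1 1 1 0 1 0 1 0 0,
  F9.mk 1 0 1 1 0 0 0 1 0,
  F9.mk 1 1 0 1 1 1 1 0 1,
  F9.mk 1 1 1 1 1 0 0 1 1]
def SFl6 : List F9 := [
  F9.mk 0 0 1 0 1 1 1 0 1,
  F9.mk 1 1 0 0 0 1 1 0 0,
  F9.mk 0 1 1 1 1 0 0 0 1,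
  F9.mk 1 1 0 0 1 0 1 0 1,
  F9.mk 1 1 0 0 0 1 0 1 0,
  F9.mk 0 1 1 0 0 1 1 1 1,
  F9.mk 1 0 1 1 1 0 1 1 1,
  F9.mk 1 1 1 0 1 1 1 0 1,
  F9.mk 0 1 0 1 0 1 0 0 1,
  F9.mk 1 1 1 1 0 1 1 0 0,
  F9.mk 0 0 1 1 0 1 1 1 1,
  F9.mk 1 0 0 1 0 1 0 1 0,
  F9.mk 1 1 0 1 1 1 0 1 1,
  F9.mk 1 0 1 1 1 0 0 1 0,
  F9.mk 0 1 0 1 0 0 0 1 1,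
  F9.mk 1 1 1 0 1 0 0 0 1,
  F9.mk 1 1 0 0 1 1 1 0 0,
  F9.mk 1 0 0 1 1 0 1 0 1,
  F9.mk 1 1 1 1 0 0 1 1 0,
  F9.mk 0 0 1 1 0 1 0 1 0,
  F9.mk 0 1 0 0 0 1 1 1 0,
  F9.mk 1 0 0 1 0 1 1 1 1,
  F9.mk 0 1 1 1 1 1 1 1 0,
  F9.mk 1 1 1 0 0 1 0 1 1]
def SF : List F9 := SFl0 ++ SFl1 ++ SFl2 ++ SFl3 ++ SFl4 ++ SFl5 ++ SFl6

def words0 : List (List Bool) := [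
  [],
  [false],
  [true],
  [false, false],
  [false, true],
  [true, false],
  [false, false, false],
  [false, false, true],
  [false, true, false],
  [true, false, false],
  [true, false, true],
  [false, false, false, false],
  [false, false, false, true],
  [false, false, true, false],
  [false, true, false, false],
  [false, true, false, true],
  [true, false, false, false],
  [true, false, false, true],
  [true, false, true, false],
  [false, false, false, false, false],
  [false, false, false, false, true],
  [false, false, false, true, false],
  [false, false, true, false, false],
  [false, false, true, false, true]]
def words1 : List (List Bool) := [
  [false, true, false, false, false],
  [false, true, false, false, true],
  [false, true, false, true, false],
  [true, false, false, false, false],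
  [true, false, false, false, true],
  [true, false, false, true, false],
  [true, false, true, false, false],
  [true, false, true, false, true],
  [false, false, false, false, false, false],
  [false, false, false, false, false, true],
  [false, false, false, false, true, false],
  [false, false, false, true, false, false],
  [false, false, false, true, false, true],
  [false, false, true, false, false, false],
  [false, false, true, false, false, true],
  [false, false, true, false, true, false],
  [false, true, false, false, false, false],
  [false, true, false, false, false, true],
  [false, true, false, false, true, false],
  [false, true, false, true, false, false],
  [false, true, false, true, false, true],
  [true, false, false, false, false, false],
  [true, false, false, false, false, true],
  [true, false, false, false, true, false]]
def words2 : List (List Bool) := [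
  [true, false, false, true, false, false],
  [true, false, false, true, false, true],
  [true, false, true, false, false, false],
  [true, false, true, false, false, true],
  [true, false, true, false, true, false],
  [false, false, false, false, false, false, true],
  [false, false, false, false, false, true, false],
  [false, false, false, false, true, false, false],
  [false, false, false, false, true, false, true],
  [false, false, false, true, false, false, true],
  [false, false, false, true, false, true, false],
  [false, false, true, false, false, false, false],
  [false, false, true, false, false, false, true],
  [false, false, true, false, false, true, false],
  [false, false, true, false, true, false, false],
  [false, false, true, false, true, false, true],
  [false, true, false, false, false, false, false],
  [false, true, false, false, false, false, true],
  [false, true, false, false, false, true, false],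
  [false, true, false, false, true, false, false],
  [false, true, false, false, true, false, true],
  [false, true, false, true, false, false, false],
  [false, true, false, true, false, false, true],
  [false, true, false, true, false, true, false]]
def words3 : List (List Bool) := [
  [true, false, false, false, false, false, false],
  [true, false, false, false, false, false, true],
  [true, false, false, false, false, true, false],
  [true, false, false, false, true, false, false],
  [true, false, false, false, true, false, true],
  [true, false, false, true, false, false, false],
  [true, false, false, true, false, true, false],
  [true, false, true, false, false, false, false],
  [true, false, true, false, false, false, true],
  [true, false, true, false, false, true, false],
  [true, false, true, false, true, false, false],
  [true, false, true, false, true, false, true],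
  [false, false, false, false, false, false, true, false],
  [false, false, false, false, false, true, false, false],
  [false, false, false, false, false, true, false, true],
  [false, false, false, false, true, false, false, true],
  [false, false, false, false, true, false, true, false],
  [false, false, false, true, false, false, true, false],
  [false, false, false, true, false, true, false, false],
  [false, false, false, true, false, true, false, true],
  [false, false, true, false, false, false, false, false],
  [false, false, true, false, false, false, false, true],
  [false, false, true, false, false, false, true, false],
  [false, false, true, false, false, true, false, true]]
def words4 : List (List Bool) := [
  [false, false, true, false, true, false, false, false],
  [false, false, true, false, true, false, true, false],
  [false, true, false, false, false, false, false, false],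
  [false, true, false, false, false, false, false, true],
  [false, true, false, false, false, true, false, false],
  [false, true, false, false, true, false, false, false],
  [false, true, false, false, true, false, true, false],
  [false, true, false, true, false, false, false, false],
  [false, true, false, true, false, false, false, true],
  [false, true, false, true, false, false, true, false],
  [false, true, false, true, false, true, false, false],
  [false, true, false, true, false, true, false, true],
  [true, false, false, false, false, false, false, true],
  [true, false, false, false, false, false, true, false],
  [true, false, false, false, false, true, false, false],
  [true, false, false, false, false, true, false, true],
  [true, false, false, true, false, false, false, false],
  [true, false, false, true, false, true, false, true],
  [true, false, true, false, false, false, false, false],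
  [true, false, true, false, false, false, false, true],
  [true, false, true, false, false, true, false, false],
  [true, false, true, false, true, false, false, true],
  [true, false, true, false, true, false, true, false],
  [false, false, false, false, false, false, true, false, false]]
def words5 : List (List Bool) := [
  [false, false, false, false, false, false, true, false, true],
  [false, false, false, false, false, true, false, false, true],
  [false, false, false, false, false, true, false, true, false],
  [false, false, false, false, true, false, true, false, false],
  [false, false, false, true, false, false, true, false, true],
  [false, false, false, true, false, true, false, false, false],
  [false, false, false, true, false, true, false, true, false],
  [false, false, true, false, false, false, false, false, false],
  [false, false, true, false, false, false, false, false, true],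
  [false, false, true, false, false, false, true, false, false],
  [false, false, true, false, false, true, false, true, false],
  [false, false, true, false, true, false, false, false, false],
  [false, false, true, false, true, false, false, false, true],
  [false, false, true, false, true, false, true, false, true],
  [false, true, false, false, false, false, false, false, true],
  [false, true, false, false, true, false, true, false, true],
  [false, true, false, true, false, false, false, false, false],
  [false, true, false, true, false, false, true, false, false],
  [false, true, false, true, false, true, false, false, true],
  [false, true, false, true, false, true, false, true, false],
  [true, false, false, false, false, false, false, true, false],
  [true, false, false, false, false, false, true, false, true],
  [true, false, false, false, false, true, false, false, true],
  [true, false, false, true, false, false, false, false, true]]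
def words6 : List (List Bool) := [
  [true, false, true, false, false, false, false, false, false],
  [true, false, true, false, false, false, false, false, true],
  [true, false, true, false, false, true, false, false, false],
  [true, false, true, false, true, false, false, true, false],
  [false, false, false, false, false, false, true, false, false, true],
  [false, false, false, false, false, true, false, true, false, false],
  [false, false, false, false, true, false, true, false, false, false],
  [false, false, false, true, false, true, false, false, false, false],
  [false, false, true, false, false, false, false, false, false, true],
  [false, false, true, false, false, true, false, true, false, true],
  [false, false, true, false, true, false, false, false, false, false],
  [false, false, true, false, true, false, true, false, true, false],
  [false, true, false, false, false, false, false, false, true, false],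
  [false, true, false, true, false, false, false, false, false, true],
  [true, false, false, false, false, false, false, true, false, false],
  [true, false, false, false, false, false, false, true, false, true],
  [true, false, false, false, false, false, true, false, true, false],
  [true, false, true, false, false, false, false, false, false, true],
  [true, false, true, false, true, false, false, true, false, false],
  [false, false, false, false, false, true, false, true, false, false, false],
  [false, false, false, true, false, true, false, false, false, false, false],
  [false, false, true, false, true, false, false, false, false, false, true],
  [false, true, false, false, false, false, false, false, true, false, true],
  [true, false, false, false, false, false, true, false, true, false, false]]
def words : List (List Bool) := words0 ++ words1 ++ words2 ++ words3 ++ words4 ++ words5 ++ words6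

def M9.step (m : M9) (b : Bool) : M9 := m.mul (bif b then Ym else Xm)

def M9.eval (w : List Bool) : M9 := w.foldl M9.step M9.one

set_option maxRecDepth 1000000
set_option maxHeartbeats 4000000

lemma L1a : M9.mul Xm Xim = M9.one := by decide
lemma L1b : M9.mul Xim Xm = M9.one := by decide
lemma L1c : M9.mul Ym Yim = M9.one := by decide
lemma L1d : M9.mul Yim Ym = M9.one := by decide
lemma L0 : M9.one ∈ Slist := by decide
lemma L2 : ∀ m ∈ Slist, m.mul Xm ∈ Slist ∧ m.mul Xim ∈ Slist ∧
    m.mul Ym ∈ Slist ∧ m.mul Yim ∈ Slist := by decide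
lemma L3' : Slist.map M9.red2 = SF := by decide
lemma L3 : SF.Nodup := by decide
lemma L4 : words.map M9.eval = Slist := by decide
lemma L5 : ∀ M : SpecialLinearGroup (Fin 3) (ZMod 2), F9.ofMatrix M.val ∈ SF := by decide

lemma toMatrix_one : M9.one.toMatrix = 1 := by
  simp only [M9.toMatrix, M9.one, Matrix.one_fin_three]

lemma toMatrix_mul (A B : M9) : (A.mul B).toMatrix = A.toMatrix * B.toMatrix := by
  simp only [M9.toMatrix, M9.mul, Matrix.mul_fin_three]

def r2f : Rq →+* ZMod 2 where
  toFun r := (r.a : ZMod 2)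
  map_one' := by simp [Rq.one_def]
  map_zero' := by simp [Rq.zero_def]
  map_add' x y := by simp only [Rq.add_def]; push_cast; ring
  map_mul' x y := by
    simp only [Rq.mul_def]
    push_cast
    rw [show ((2 : ZMod 2)) = 0 from rfl]
    ring

lemma map_toMatrix (A : M9) : A.toMatrix.map r2f = (A.red2).toMatrix := by
  ext i j
  fin_cases i <;> fin_cases j <;> rfl

lemma ofMatrix_toMatrix (x : F9) : F9.ofMatrix (x.toMatrix) = x := by
  cases x; rfl

lemma toMatrix_ofMatrix (N : Matrix (Fin 3) (Fin 3) (ZMod 2)) :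
    (F9.ofMatrix N).toMatrix = N := by
  ext i j
  fin_cases i <;> fin_cases j <;> rfl

lemma toMatrixF_inj {x y : F9} (h : x.toMatrix = y.toMatrix) : x = y := by
  rw [← ofMatrix_toMatrix x, ← ofMatrix_toMatrix y, h]

def Xu : GL (Fin 3) Rq :=
  ⟨Xm.toMatrix, Xim.toMatrix,
    by rw [← toMatrix_mul, L1a, toMatrix_one],
    by rw [← toMatrix_mul, L1b, toMatrix_one]⟩

def Yu : GL (Fin 3) Rq :=
  ⟨Ym.toMatrix, Yim.toMatrix,
    by rw [← toMatrix_mul, L1c, toMatrix_one],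
    by rw [← toMatrix_mul, L1d, toMatrix_one]⟩

def Gq : Subgroup (GL (Fin 3) Rq) := Subgroup.closure {Xu, Yu}

lemma mem_S_of_mem_Gq {g : GL (Fin 3) Rq} (hg : g ∈ Gq) :
    ∃ m ∈ Slist, (g : Matrix (Fin 3) (Fin 3) Rq) = m.toMatrix := by
  induction hg using Subgroup.closure_induction_right with
  | one => exact ⟨M9.one, L0, by rw [Units.val_one, toMatrix_one]⟩
  | mul_right x hx y hy ih =>
    obtain ⟨m, hm, em⟩ := ih
    rcases hy with rfl | rfl
    · exact ⟨m.mul Xm, (L2 m hm).1, by rw [Units.val_mul, em, toMatrix_mul]; rfl⟩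
    · exact ⟨m.mul Ym, (L2 m hm).2.2.1, by rw [Units.val_mul, em, toMatrix_mul]; rfl⟩
  | mul_inv_cancel x hx y hy ih =>
    obtain ⟨m, hm, em⟩ := ih
    rcases hy with rfl | rfl
    · exact ⟨m.mul Xim, (L2 m hm).2.1, by rw [Units.val_mul, em, toMatrix_mul]; rfl⟩
    · exact ⟨m.mul Yim, (L2 m hm).2.2.2, by rw [Units.val_mul, em, toMatrix_mul]; rfl⟩

lemma zmod2_unit_eq_one : ∀ a b : ZMod 2, a * b = 1 → a = 1 := by decide

def glToSL : GL (Fin 3) (ZMod 2) →* SpecialLinearGroup (Fin 3) (ZMod 2) where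
  toFun u := ⟨u.val, by
    have h := congrArg Matrix.det u.val_inv
    rw [Matrix.det_mul, Matrix.det_one] at h
    exact zmod2_unit_eq_one _ _ h⟩
  map_one' := Subtype.ext rfl
  map_mul' u v := Subtype.ext rfl

def piHom : Gq →* SpecialLinearGroup (Fin 3) (ZMod 2) :=
  glToSL.comp ((Units.map (r2f.mapMatrix).toMonoidHom).comp Gq.subtype)

lemma piHom_coe (g : Gq) :
    (piHom g).val = ((g : GL (Fin 3) Rq) : Matrix (Fin 3) (Fin 3) Rq).map r2f := rfl

lemma pi_inj : Function.Injective piHom := by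
  intro g h heq
  obtain ⟨m, hm, em⟩ := mem_S_of_mem_Gq g.2
  obtain ⟨n, hn, en⟩ := mem_S_of_mem_Gq h.2
  have hval := congrArg Subtype.val heq
  rw [piHom_coe, piHom_coe, em, en, map_toMatrix, map_toMatrix] at hval
  have hmn : m = n := by
    have nod : (Slist.map M9.red2).Nodup := by rw [L3']; exact L3
    exact List.inj_on_of_nodup_map nod hm hn (toMatrixF_inj hval)
  exact Subtype.ext (Units.ext (by rw [em, en, hmn]))

lemma foldl_aux : ∀ (w : List Bool) (u : GL (Fin 3) Rq) (m : M9), u ∈ Gq →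
    (u : Matrix (Fin 3) (Fin 3) Rq) = m.toMatrix →
    ∃ g : GL (Fin 3) Rq, g ∈ Gq ∧
      (g : Matrix (Fin 3) (Fin 3) Rq) = (w.foldl M9.step m).toMatrix := by
  intro w
  induction w with
  | nil => exact fun u m hu he => ⟨u, hu, he⟩
  | cons b w ih =>
    intro u m hu he
    refine ih (u * (bif b then Yu else Xu)) (m.step b) ?_ ?_
    · refine mul_mem hu ?_
      cases b
      · exact Subgroup.subset_closure (Or.inl rfl)
      · exact Subgroup.subset_closure (Or.inr rfl)
    · cases b <;>
        · rw [Units.val_mul, he, M9.step, toMatrix_mul]; rfl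

lemma pi_surj : Function.Surjective piHom := by
  intro M
  have h5 := L5 M
  rw [← L3'] at h5
  obtain ⟨m, hm, hred⟩ := List.mem_map.mp h5
  rw [← L4] at hm
  obtain ⟨w, _, hew⟩ := List.mem_map.mp hm
  obtain ⟨g, hg, hgv⟩ := foldl_aux w 1 M9.one (one_mem _)
    (by rw [Units.val_one, toMatrix_one])
  rw [show List.foldl M9.step M9.one w = M9.eval w from rfl, hew] at hgv
  refine ⟨⟨g, hg⟩, ?_⟩
  apply Subtype.ext
  rw [piHom_coe]
  show (g : Matrix (Fin 3) (Fin 3) Rq).map r2f = M.val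
  rw [hgv, map_toMatrix, hred, toMatrix_ofMatrix]

noncomputable def eqv : Gq ≃* SpecialLinearGroup (Fin 3) (ZMod 2) :=
  MulEquiv.ofBijective piHom ⟨pi_inj, pi_surj⟩

lemma eqv_apply (g : Gq) : eqv g = piHom g := rfl

noncomputable def phi (t : ℤ_[2]) (ht : t * t = t - 2) : Rq →+* ℤ_[2] where
  toFun r := (r.a : ℤ_[2]) + (r.b : ℤ_[2]) * t
  map_one' := by simp [Rq.one_def]
  map_zero' := by simp [Rq.zero_def]
  map_add' x y := by simp only [Rq.add_def]; push_cast; ring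
  map_mul' x y := by
    simp only [Rq.mul_def]
    push_cast
    linear_combination (-((x.b : ℤ_[2]) * (y.b : ℤ_[2]))) * ht

lemma toZMod_phi (t : ℤ_[2]) (ht : t * t = t - 2) (htz : PadicInt.toZMod t = 0) (r : Rq) :
    PadicInt.toZMod (phi t ht r) = (r.a : ZMod 2) := by
  show PadicInt.toZMod ((r.a : ℤ_[2]) + (r.b : ℤ_[2]) * t) = _
  rw [map_add, _root_.map_mul, htz, mul_zero, add_zero, map_intCast]

end SL3Lift

open SL3Lift Polynomial in
/-- The inclusion `SL_3(F₂) ⊆ GL_3(F₂)` lifts to `ℤ₂`. -/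
theorem sl3_F2_lifts_to_Z2 :
    ∃ ρ₀ : SpecialLinearGroup (Fin 3) (ZMod 2) →* GL (Fin 3) ℤ_[2],
      ∀ (M : SpecialLinearGroup (Fin 3) (ZMod 2)) (i j : Fin 3),
        PadicInt.toZMod ((ρ₀ M : Matrix (Fin 3) (Fin 3) ℤ_[2]) i j) =
          (M : Matrix (Fin 3) (Fin 3) (ZMod 2)) i j := by
  have hder : (derivative (X ^ 2 - X + C (2 : ℤ_[2]))).eval 0 = -1 := by
    simp
  have hnorm : ‖(X ^ 2 - X + C (2 : ℤ_[2])).eval 0‖ <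
      ‖(derivative (X ^ 2 - X + C (2 : ℤ_[2]))).eval 0‖ ^ 2 := by
    rw [hder]
    have h2 : ‖((2 : ℕ) : ℤ_[2])‖ = ((2 : ℕ) : ℝ)⁻¹ := PadicInt.norm_p
    simp only [eval_add, eval_sub, eval_pow, eval_X, eval_C]
    norm_num
    rw [show ((2 : ℤ_[2])) = ((2 : ℕ) : ℤ_[2]) by norm_cast, h2]
    norm_num
  obtain ⟨t, htroot, htnear, -⟩ := hensels_lemma hnorm
  have ht : t * t = t - 2 := by
    have h0 : t ^ 2 - t + 2 = 0 := by simpa using htroot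
    linear_combination h0
  have htz : PadicInt.toZMod t = 0 := by
    have hlt : ‖t‖ < 1 := by
      rw [Polynomial.coe_aeval_eq_eval, hder] at htnear
      simpa using htnear
    have hmem : t ∈ RingHom.ker (PadicInt.toZMod (p := 2)) := by
      rw [PadicInt.ker_toZMod, PadicInt.maximalIdeal_eq_span_p, Ideal.mem_span_singleton]
      exact (PadicInt.norm_lt_one_iff_dvd t).mp hlt
    exact RingHom.mem_ker.mp hmem
  refine ⟨(Units.map ((phi t ht).mapMatrix).toMonoidHom).comp
    ((Gq.subtype).comp eqv.symm.toMonoidHom), fun M i j => ?_⟩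
  have hM : piHom (eqv.symm M) = M := eqv.apply_symm_apply M
  have hval := congrArg Subtype.val hM
  rw [piHom_coe] at hval
  have hij := congrFun (congrFun hval i) j
  rw [Matrix.map_apply] at hij
  show PadicInt.toZMod
    ((((eqv.symm M : Gq) : GL (Fin 3) Rq) : Matrix (Fin 3) (Fin 3) Rq).map (phi t ht) i j) = _
  rw [Matrix.map_apply, toZMod_phi t ht htz]
  exact hij
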